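/- Fix real numbers P_p > 0, λ_p > 0, σ > 0, λ_s > 0, α > 2, and a charging radius ρ > 0. For each integer N ≥ 1, with p_N = exp(−λ_s π ρ²/N) (so that p_N^N = exp(−λ_s π ρ²) is independent of N), define E(N) = P_p λ_p σ π [ρ²(p_N − p_N^N)/(1 − p_N) + α/(α − 2)] if 0 < ρ ≤ 1 and E(N) = P_p λ_p σ π [(α − 2ρ^{2−α})(1 − p_N^N)/((α − 2)(1 − p_N)) + 2ρ^{2−α}/(α − 2)] if ρ > 1. Then E(N) is strictly increasing in N, i.e., E(N+1) > E(N) for every integer N ≥ 1. (Claim following Proposition 2: the average received power increases with the number of antenna sectors.) -/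

import Mathlib

theorem stmt_12 (Pp lp σ ls α ρ : ℝ)
    (hPp : 0 < Pp) (hlp : 0 < lp) (hσ : 0 < σ) (hls : 0 < ls) (hα : 2 < α) (hρ : 0 < ρ) :
    ∀ N : ℕ, 1 ≤ N →
      (let E : ℕ → ℝ := fun N =>
        let p : ℝ := Real.exp (-(ls * Real.pi * ρ ^ 2 / N));
        if ρ ≤ 1 then
          Pp * lp * σ * Real.pi * (ρ ^ 2 * (p - p ^ N) / (1 - p) + α / (α - 2))
        else
          Pp * lp * σ * Real.pi *
            ((α - 2 * ρ ^ (2 - α)) * (1 - p ^ N) / ((α - 2) * (1 - p)) +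
              2 * ρ ^ (2 - α) / (α - 2));
      E (N + 1) > E N) := by
  intro N hN E
  have hπ := Real.pi_pos
  have hN1 : (1:ℝ) ≤ (N:ℝ) := by exact_mod_cast hN
  have hNpos : (0:ℝ) < (N:ℝ) := lt_of_lt_of_le one_pos hN1
  have hN1pos : (0:ℝ) < (N:ℝ) + 1 := by linarith
  simp only [E]
  push_cast
  set c : ℝ := ls * Real.pi * ρ ^ 2 with hc_def
  have hc : 0 < c := by positivity
  set q : ℝ := Real.exp (-c) with hq_def
  set pN : ℝ := Real.exp (-(c / N)) with hpN_def
  set pM : ℝ := Real.exp (-(c / ((N:ℝ)+1))) with hpM_def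
  have hq1 : q < 1 := by
    rw [hq_def, Real.exp_lt_one_iff]; linarith
  have hpN1 : pN < 1 := by
    rw [hpN_def, Real.exp_lt_one_iff]
    have : 0 < c / N := div_pos hc hNpos
    linarith
  have hpM1 : pM < 1 := by
    rw [hpM_def, Real.exp_lt_one_iff]
    have : 0 < c / ((N:ℝ)+1) := div_pos hc hN1pos
    linarith
  have hlt : pN < pM := by
    rw [hpN_def, hpM_def, Real.exp_lt_exp]
    have : c / ((N:ℝ)+1) < c / N := by
      rw [div_lt_div_iff₀ hN1pos hNpos]; nlinarith
    linarith
  have hqpN : q ≤ pN := by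
    rw [hq_def, hpN_def, Real.exp_le_exp]
    have : c / N ≤ c := div_le_self hc.le hN1
    linarith
  have h1N : 0 < 1 - pN := by linarith
  have h1M : 0 < 1 - pM := by linarith
  have hpowN : pN ^ N = q := by
    rw [hpN_def, ← Real.exp_nat_mul, hq_def]
    congr 1
    field_simp
  have hpowM : pM ^ (N + 1) = q := by
    rw [hpM_def, ← Real.exp_nat_mul, hq_def]
    congr 1
    push_cast
    field_simp
  rw [gt_iff_lt]
  split_ifs with h
  · rw [hpowN, hpowM]
    apply mul_lt_mul_of_pos_left _ (by positivity)
    apply add_lt_add_of_lt_of_le _ le_rfl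
    rw [div_lt_div_iff₀ h1N h1M]
    have hρ2 : (0:ℝ) < ρ ^ 2 := by positivity
    nlinarith [mul_pos hρ2 (mul_pos (sub_pos.2 hlt) (sub_pos.2 hq1))]
  · rw [hpowN, hpowM]
    apply mul_lt_mul_of_pos_left _ (by positivity)
    apply add_lt_add_of_lt_of_le _ le_rfl
    have hρ1 : 1 < ρ := lt_of_not_ge h
    have hr1 : ρ ^ (2 - α) < 1 :=
      Real.rpow_lt_one_of_one_lt_of_neg hρ1 (by linarith)
    have hrpos : 0 < ρ ^ (2 - α) := Real.rpow_pos_of_pos hρ _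
    have hnum : 0 < (α - 2 * ρ ^ (2 - α)) * (1 - q) := by nlinarith
    apply div_lt_div_of_pos_left hnum
    · exact mul_pos (by linarith) h1M
    · exact mul_lt_mul_of_pos_left (by linarith) (by linarith)
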